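/- arXiv:2012.00962 — 2 statements merged into one kernel-verified Lean document; each statement's English description precedes it below -/
import Mathlib

section
/- Let ρ ∈ (0,1), α > 0, let (k_n) be a strictly increasing sequence of natural numbers with k_0 = 0, and let v be a cycle-Lyapunov sequence for (ρ, α, (k_n)). Then Σ_{t=0}^{∞} v(t) ≤ (1 + α/(1−ρ)) · v(0) · Σ_{n=0}^{∞} Ξ(n) (as an inequality in [0, ∞]); in particular, if Σ_{n=0}^{∞} Ξ(n) < ∞, then Σ_{t=0}^{∞} v(t) < ∞. -/
open scoped ENNReal

/-- `v : ℕ → ℝ` is a cycle-Lyapunov sequence for `(ρ, α, k)`: it is nonnegative, satisfies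
`v (k n + 1) ≤ α * v (k n)` at the start of each cycle, and contracts by `ρ` at every step
`t` with `k n + 1 ≤ t ≤ k (n+1) - 1` within a cycle. -/
def IsCycleLyapunov (ρ α : ℝ) (k : ℕ → ℕ) (v : ℕ → ℝ) : Prop :=
  (∀ t, 0 ≤ v t) ∧
  (∀ n, v (k n + 1) ≤ α * v (k n)) ∧
  (∀ n t, k n + 1 ≤ t → t < k (n + 1) → v (t + 1) ≤ ρ * v t)

/-- `Ξ(n) = α^n · ρ^{Σ_{i=1}^{n} (Δ_i − 1)}` where `Δ_i = k i − k (i−1)`; in particular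
`Ξ(0) = 1` (empty sum). -/
noncomputable def Xi (ρ α : ℝ) (k : ℕ → ℕ) (n : ℕ) : ℝ :=
  α ^ n * ρ ^ (∑ i ∈ Finset.range n, (k (i + 1) - k i - 1))

section Aux

variable {ρ α : ℝ} {k : ℕ → ℕ} {v : ℕ → ℝ}

lemma decay_aux (hρ : ρ ∈ Set.Ioo (0 : ℝ) 1) (hv : IsCycleLyapunov ρ α k v) (n : ℕ) :
    ∀ j, k n + 1 + j ≤ k (n + 1) → v (k n + 1 + j) ≤ ρ ^ j * (α * v (k n)) := by
  obtain ⟨hpos, hstart, hstep⟩ := hv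
  intro j
  induction j with
  | zero => intro _; simpa using hstart n
  | succ j ih =>
    intro hj
    have h1 : k n + 1 + j < k (n + 1) := by omega
    have h2 := hstep n (k n + 1 + j) (by omega) h1
    have h3 := ih (by omega)
    have : v (k n + 1 + (j + 1)) = v ((k n + 1 + j) + 1) := by ring_nf
    rw [this]
    calc v ((k n + 1 + j) + 1) ≤ ρ * v (k n + 1 + j) := h2
      _ ≤ ρ * (ρ ^ j * (α * v (k n))) := mul_le_mul_of_nonneg_left h3 hρ.1.le
      _ = ρ ^ (j + 1) * (α * v (k n)) := by ring

lemma Xi_nonneg (hρ : ρ ∈ Set.Ioo (0 : ℝ) 1) (hα : 0 < α) (n : ℕ) :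
    0 ≤ Xi ρ α k n := by
  have h1 := hρ.1
  unfold Xi
  positivity

lemma v_k_le (hρ : ρ ∈ Set.Ioo (0 : ℝ) 1) (hα : 0 < α) (hk : StrictMono k)
    (hk0 : k 0 = 0) (hv : IsCycleLyapunov ρ α k v) (n : ℕ) :
    v (k n) ≤ Xi ρ α k n * v 0 := by
  induction n with
  | zero => simp [Xi, hk0]
  | succ n ih =>
    have hkn : k n + 1 ≤ k (n + 1) := hk (Nat.lt_succ_self n)
    set d := k (n + 1) - k n - 1 with hd
    have hle : k n + 1 + d = k (n + 1) := by omega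
    have h1 : v (k (n + 1)) ≤ ρ ^ d * (α * v (k n)) := by
      have := decay_aux hρ hv n d (by omega)
      rwa [hle] at this
    have h2 : ρ ^ d * (α * v (k n)) ≤ ρ ^ d * (α * (Xi ρ α k n * v 0)) := by
      apply mul_le_mul_of_nonneg_left _ (pow_nonneg hρ.1.le d)
      exact mul_le_mul_of_nonneg_left ih hα.le
    have hXi : Xi ρ α k (n + 1) = ρ ^ d * (α * Xi ρ α k n) := by
      unfold Xi
      rw [Finset.sum_range_succ, pow_add, pow_succ]
      ring
    calc v (k (n + 1)) ≤ ρ ^ d * (α * (Xi ρ α k n * v 0)) := h1.trans h2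
      _ = Xi ρ α k (n + 1) * v 0 := by rw [hXi]; ring

lemma cycle_sum_le (hρ : ρ ∈ Set.Ioo (0 : ℝ) 1) (hα : 0 < α) (hk : StrictMono k)
    (hv : IsCycleLyapunov ρ α k v) (n : ℕ) :
    ∑ t ∈ Finset.Ico (k n) (k (n + 1)), v t ≤ (1 + α / (1 - ρ)) * v (k n) := by
  have hkn : k n < k (n + 1) := hk (Nat.lt_succ_self n)
  rw [Finset.sum_eq_sum_Ico_succ_bot hkn]
  have hsum : ∑ t ∈ Finset.Ico (k n + 1) (k (n + 1)), v t
      ≤ (α / (1 - ρ)) * v (k n) := by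
    rw [Finset.sum_Ico_eq_sum_range]
    have hterm : ∀ j ∈ Finset.range (k (n + 1) - (k n + 1)),
        v (k n + 1 + j) ≤ ρ ^ j * (α * v (k n)) := by
      intro j hj
      simp only [Finset.mem_range] at hj
      exact decay_aux hρ hv n j (by omega)
    calc ∑ j ∈ Finset.range (k (n + 1) - (k n + 1)), v (k n + 1 + j)
        ≤ ∑ j ∈ Finset.range (k (n + 1) - (k n + 1)), ρ ^ j * (α * v (k n)) :=
          Finset.sum_le_sum hterm
      _ = (∑ j ∈ Finset.range (k (n + 1) - (k n + 1)), ρ ^ j) * (α * v (k n)) := by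
          rw [Finset.sum_mul]
      _ ≤ (1 - ρ)⁻¹ * (α * v (k n)) := by
          apply mul_le_mul_of_nonneg_right _ (mul_nonneg hα.le (hv.1 _))
          have hs : Summable fun j : ℕ => ρ ^ j :=
            summable_geometric_of_lt_one hρ.1.le hρ.2
          have := Summable.sum_le_tsum (Finset.range (k (n + 1) - (k n + 1)))
            (fun i _ => pow_nonneg hρ.1.le i) hs
          rwa [tsum_geometric_of_lt_one hρ.1.le hρ.2] at this
      _ = (α / (1 - ρ)) * v (k n) := by ring
  linarith

end Aux

theorem total_sum_bound (ρ α : ℝ) (hρ : ρ ∈ Set.Ioo (0 : ℝ) 1) (hα : 0 < α)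
    (k : ℕ → ℕ) (hk : StrictMono k) (hk0 : k 0 = 0)
    (v : ℕ → ℝ) (hv : IsCycleLyapunov ρ α k v) :
    (∑' t : ℕ, ENNReal.ofReal (v t)) ≤
      ENNReal.ofReal (1 + α / (1 - ρ)) * ENNReal.ofReal (v 0) *
        ∑' n : ℕ, ENNReal.ofReal (Xi ρ α k n) ∧
    ((∑' n : ℕ, ENNReal.ofReal (Xi ρ α k n)) < ⊤ →
      (∑' t : ℕ, ENNReal.ofReal (v t)) < ⊤) := by
  have h1ρ : (0:ℝ) < 1 - ρ := by linarith [hρ.2]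
  have hc : (0:ℝ) ≤ 1 + α / (1 - ρ) := by positivity
  -- bound on each cycle sum, in ENNReal
  have hcycle : ∀ n, ∑ t ∈ Finset.Ico (k n) (k (n + 1)), ENNReal.ofReal (v t)
      ≤ ENNReal.ofReal (1 + α / (1 - ρ)) * ENNReal.ofReal (v 0) *
        ENNReal.ofReal (Xi ρ α k n) := by
    intro n
    have e1 : ∑ t ∈ Finset.Ico (k n) (k (n + 1)), ENNReal.ofReal (v t)
        = ENNReal.ofReal (∑ t ∈ Finset.Ico (k n) (k (n + 1)), v t) := by
      rw [ENNReal.ofReal_sum_of_nonneg (fun t _ => hv.1 t)]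
    rw [e1]
    have h2 : ∑ t ∈ Finset.Ico (k n) (k (n + 1)), v t
        ≤ (1 + α / (1 - ρ)) * (Xi ρ α k n * v 0) := by
      calc ∑ t ∈ Finset.Ico (k n) (k (n + 1)), v t
          ≤ (1 + α / (1 - ρ)) * v (k n) := cycle_sum_le hρ hα hk hv n
        _ ≤ (1 + α / (1 - ρ)) * (Xi ρ α k n * v 0) :=
            mul_le_mul_of_nonneg_left (v_k_le hρ hα hk hk0 hv n) hc
    calc ENNReal.ofReal (∑ t ∈ Finset.Ico (k n) (k (n + 1)), v t)
        ≤ ENNReal.ofReal ((1 + α / (1 - ρ)) * (Xi ρ α k n * v 0)) :=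
          ENNReal.ofReal_le_ofReal h2
      _ = ENNReal.ofReal (1 + α / (1 - ρ)) * ENNReal.ofReal (v 0) *
          ENNReal.ofReal (Xi ρ α k n) := by
          rw [ENNReal.ofReal_mul hc, ENNReal.ofReal_mul (Xi_nonneg hρ hα n)]
          ring
  -- partition of an initial segment into cycles
  have hpart : ∀ N : ℕ, ∑ t ∈ Finset.range (k N), ENNReal.ofReal (v t)
      = ∑ n ∈ Finset.range N, ∑ t ∈ Finset.Ico (k n) (k (n + 1)),
          ENNReal.ofReal (v t) := by
    intro N
    induction N with
    | zero => simp [hk0]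
    | succ N ih =>
      rw [Finset.sum_range_succ, ← ih, Finset.range_eq_Ico, Finset.range_eq_Ico]
      exact (Finset.sum_Ico_consecutive (fun t => ENNReal.ofReal (v t)) (Nat.zero_le (k N))
        (hk (Nat.lt_succ_self N)).le).symm
  have hmain : (∑' t : ℕ, ENNReal.ofReal (v t)) ≤
      ENNReal.ofReal (1 + α / (1 - ρ)) * ENNReal.ofReal (v 0) *
        ∑' n : ℕ, ENNReal.ofReal (Xi ρ α k n) := by
    rw [← ENNReal.tsum_mul_left, ENNReal.tsum_eq_iSup_sum]
    apply iSup_le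
    intro s
    set N := s.sup id + 1 with hN
    have hsub : s ⊆ Finset.range (k N) := by
      intro t ht
      simp only [Finset.mem_range]
      have h1 : t ≤ s.sup id := Finset.le_sup (f := id) ht
      have h2 : N ≤ k N := hk.le_apply
      omega
    calc ∑ t ∈ s, ENNReal.ofReal (v t)
        ≤ ∑ t ∈ Finset.range (k N), ENNReal.ofReal (v t) :=
          Finset.sum_le_sum_of_subset hsub
      _ = ∑ n ∈ Finset.range N, ∑ t ∈ Finset.Ico (k n) (k (n + 1)),
            ENNReal.ofReal (v t) := hpart N
      _ ≤ ∑ n ∈ Finset.range N, ENNReal.ofReal (1 + α / (1 - ρ)) *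
            ENNReal.ofReal (v 0) * ENNReal.ofReal (Xi ρ α k n) :=
          Finset.sum_le_sum (fun n _ => hcycle n)
      _ ≤ ∑' n : ℕ, ENNReal.ofReal (1 + α / (1 - ρ)) * ENNReal.ofReal (v 0) *
            ENNReal.ofReal (Xi ρ α k n) := ENNReal.sum_le_tsum _
  refine ⟨hmain, fun hfin => lt_of_le_of_lt hmain ?_⟩
  exact ENNReal.mul_lt_top (ENNReal.mul_lt_top ENNReal.ofReal_lt_top ENNReal.ofReal_lt_top) hfin
end

section
/- Let S be a finite type, let S₀ and S₁ be disjoint subsets of S with S₀ ∪ S₁ = S, and let V : S × S → ℝ be a matrix with nonnegative entries whose row sums satisfy Σ_{j∈S} V(i,j) ≤ 1 for every i ∈ S. Define D(1) := V_{0,0} and D(l) := V_{0,1} · (V_{1,1})^{l−2} · V_{1,0} for l ≥ 2, where V_{0,0}, V_{0,1}, V_{1,1}, V_{1,0} are the submatrices of V restricted to (S₀,S₀), (S₀,S₁), (S₁,S₁), (S₁,S₀). Then all entries of every D(l) are nonnegative, and for every L ≥ 1 and every i ∈ S₀: Σ_{l=1}^{L} Σ_{j∈S₀} [D(l)]_{i,j}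 ≤ 1. Consequently, for all i, j ∈ S₀ the series Σ_{l=1}^{∞} [D(l)]_{i,j} converges, and the matrix Ṽ := Σ_{l=1}^{∞} D(l) has nonnegative entries with row sums at most 1. -/
open Matrix Finset

theorem first_return_matrices_substochastic
    {S : Type*} [Fintype S] [DecidableEq S]
    (S₀ S₁ : Finset S) (hdisj : Disjoint S₀ S₁) (hunion : S₀ ∪ S₁ = Finset.univ)
    (V : Matrix S S ℝ) (hVnn : ∀ i j, 0 ≤ V i j) (hVrow : ∀ i, ∑ j, V i j ≤ 1)
    (D : ℕ → Matrix {x // x ∈ S₀} {x // x ∈ S₀} ℝ)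
    (hD1 : D 1 = Matrix.of fun (a b : {x // x ∈ S₀}) => V a b)
    (hDl : ∀ l, 2 ≤ l → D l =
      Matrix.of (fun (a : {x // x ∈ S₀}) (b : {x // x ∈ S₁}) => V a b) *
        (Matrix.of fun (a b : {x // x ∈ S₁}) => V a b) ^ (l - 2) *
        Matrix.of (fun (a : {x // x ∈ S₁}) (b : {x // x ∈ S₀}) => V a b)) :
    (∀ l, 1 ≤ l → ∀ i j, 0 ≤ D l i j) ∧
    (∀ L, 1 ≤ L → ∀ i, ∑ l ∈ Finset.Icc 1 L, ∑ j, D l i j ≤ 1) ∧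
    (∀ i j, Summable fun l : ℕ => D (l + 1) i j) ∧
    (∀ i j, 0 ≤ ∑' l : ℕ, D (l + 1) i j) ∧
    (∀ i, ∑ j, ∑' l : ℕ, D (l + 1) i j ≤ 1) := by
  classical
  set A : Matrix {x // x ∈ S₀} {x // x ∈ S₁} ℝ :=
    Matrix.of (fun a b => V a b) with hA
  set B : Matrix {x // x ∈ S₁} {x // x ∈ S₁} ℝ :=
    Matrix.of (fun a b => V a b) with hB
  set C : Matrix {x // x ∈ S₁} {x // x ∈ S₀} ℝ :=
    Matrix.of (fun a b => V a b) with hC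
  have hBpow : ∀ m (a b : {x // x ∈ S₁}), 0 ≤ (B ^ m) a b := by
    intro m
    induction m with
    | zero =>
      intro a b
      simp only [pow_zero, Matrix.one_apply]
      split <;> norm_num
    | succ n ih =>
      intro a b
      rw [pow_succ, Matrix.mul_apply]
      exact Finset.sum_nonneg fun k _ => mul_nonneg (ih a k) (hVnn k b)
  have hABnn : ∀ m (i : {x // x ∈ S₀}) (k : {x // x ∈ S₁}),
      0 ≤ (A * B ^ m : Matrix _ _ ℝ) i k := by
    intro m i k
    rw [Matrix.mul_apply]
    exact Finset.sum_nonneg fun t _ => mul_nonneg (hVnn i t) (hBpow m t k)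
  have hDnn : ∀ l, 1 ≤ l → ∀ i j, 0 ≤ D l i j := by
    intro l hl i j
    rcases eq_or_lt_of_le hl with h1 | h2
    · rw [← h1, hD1]; exact hVnn i j
    · rw [hDl l h2, Matrix.mul_apply]
      exact Finset.sum_nonneg fun k _ => mul_nonneg (hABnn (l - 2) i k) (hVnn k j)
  have hsplit : ∀ i : S,
      (∑ j : {x // x ∈ S₀}, V i j) + (∑ j : {x // x ∈ S₁}, V i j) ≤ 1 := by
    intro i
    rw [Finset.sum_coe_sort S₀ (fun j => V i j), Finset.sum_coe_sort S₁ (fun j => V i j),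
      ← Finset.sum_union hdisj, hunion]
    exact hVrow i
  have hkey : ∀ (M : Matrix {x // x ∈ S₀} {x // x ∈ S₁} ℝ),
      (∀ i k, 0 ≤ M i k) → ∀ i,
      (∑ j, (M * C) i j) + (∑ j, (M * B) i j) ≤ ∑ k, M i k := by
    intro M hM i
    have h1 : ∑ j, (M * C) i j = ∑ k, M i k * ∑ j : {x // x ∈ S₀}, C k j := by
      simp only [Matrix.mul_apply]
      rw [Finset.sum_comm]
      simp [Finset.mul_sum]
    have h2 : ∑ j, (M * B) i j = ∑ k, M i k * ∑ j : {x // x ∈ S₁}, B k j := by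
      simp only [Matrix.mul_apply]
      rw [Finset.sum_comm]
      simp [Finset.mul_sum]
    rw [h1, h2, ← Finset.sum_add_distrib]
    apply Finset.sum_le_sum
    intro k _
    rw [← mul_add]
    calc M i k * ((∑ j : {x // x ∈ S₀}, C k j) + ∑ j : {x // x ∈ S₁}, B k j)
        ≤ M i k * 1 := mul_le_mul_of_nonneg_left (hsplit k) (hM i k)
      _ = M i k := mul_one _
  have hmain : ∀ m (i : {x // x ∈ S₀}),
      (∑ l ∈ Finset.Icc 1 (m + 1), ∑ j, D l i j) + (∑ k, (A * B ^ m) i k) ≤ 1 := by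
    intro m
    induction m with
    | zero =>
      intro i
      simp only [Finset.Icc_self, Finset.sum_singleton, pow_zero, Matrix.mul_one, hD1]
      exact hsplit i
    | succ n ih =>
      intro i
      rw [Finset.sum_Icc_succ_top (by omega : 1 ≤ n + 1 + 1)]
      have hD : D (n + 2) = A * B ^ n * C := by
        rw [hDl (n + 2) (by omega)]; norm_num
      have hpow : A * B ^ (n + 1) = (A * B ^ n) * B := by
        rw [pow_succ, ← Matrix.mul_assoc]
      rw [hD, hpow, add_assoc]
      calc (∑ l ∈ Finset.Icc 1 (n + 1), ∑ j, D l i j)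
            + ((∑ j, (A * B ^ n * C) i j) + ∑ k, ((A * B ^ n) * B) i k)
          ≤ (∑ l ∈ Finset.Icc 1 (n + 1), ∑ j, D l i j) + ∑ k, (A * B ^ n) i k := by
            gcongr
            exact hkey (A * B ^ n) (hABnn n) i
        _ ≤ 1 := ih i
  have hpart2 : ∀ L, 1 ≤ L → ∀ i, ∑ l ∈ Finset.Icc 1 L, ∑ j, D l i j ≤ 1 := by
    intro L hL i
    obtain ⟨m, rfl⟩ : ∃ m, L = m + 1 := ⟨L - 1, by omega⟩
    have := hmain m i
    have hnn : 0 ≤ ∑ k, (A * B ^ m) i k :=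
      Finset.sum_nonneg fun k _ => hABnn m i k
    linarith
  have hrange : ∀ (n : ℕ) (i : {x // x ∈ S₀}) (f : ℕ → ℝ),
      ∑ l ∈ Finset.range n, f (l + 1) = ∑ l ∈ Finset.Icc 1 n, f l := by
    intro n i f
    rw [← Finset.Ico_add_one_right_eq_Icc, Finset.sum_Ico_eq_sum_range]
    simp [add_comm]
  have hrowsum_le : ∀ n (i : {x // x ∈ S₀}),
      ∑ l ∈ Finset.range n, ∑ j, D (l + 1) i j ≤ 1 := by
    intro n i
    rw [hrange n i (fun l => ∑ j, D l i j)]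
    rcases Nat.eq_zero_or_pos n with h | h
    · simp [h]
    · exact hpart2 n h i
  have hsumm : ∀ i j, Summable fun l : ℕ => D (l + 1) i j := by
    intro i j
    apply summable_of_sum_range_le (c := 1)
      (fun n => hDnn (n + 1) (by omega) i j)
    intro n
    calc ∑ l ∈ Finset.range n, D (l + 1) i j
        ≤ ∑ l ∈ Finset.range n, ∑ j', D (l + 1) i j' := by
          apply Finset.sum_le_sum
          intro l _
          exact Finset.single_le_sum (fun j' _ => hDnn (l + 1) (by omega) i j')
            (Finset.mem_univ j)
      _ ≤ 1 := hrowsum_le n i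
  refine ⟨hDnn, hpart2, hsumm, ?_, ?_⟩
  · intro i j
    exact tsum_nonneg fun l => hDnn (l + 1) (by omega) i j
  · intro i
    have hswap : ∑ j, ∑' l : ℕ, D (l + 1) i j = ∑' l : ℕ, ∑ j, D (l + 1) i j :=
      (Summable.tsum_finsetSum fun j _ => hsumm i j).symm
    rw [hswap]
    exact Summable.tsum_le_of_sum_range_le
      (summable_sum fun j _ => hsumm i j)
      (fun n => hrowsum_le n i)
end
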